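/- Suppose $(A_\alpha : \alpha \in S)$ is a $\diamondsuit(S)$-sequence for a stationary set $S \subseteq \{\alpha < \omega_2 : \mathrm{cf}(\alpha) = \omega_1\}$. Then $\mathrm{Unif}^c_{S,2}$ fails: there is a function $F : S \to 2$ such that no function $H : \omega_2 \to 2$ uniformizes $F$ modulo clubs. -/

import Mathlib

noncomputable section

universe u

open Cardinal

/-- The first uncountable ordinal. -/
def omega1 : Ordinal := (aleph 1).ord

/-- The second uncountable ordinal. -/
def omega2 : Ordinal := (aleph 2).ord

/-- The order type of a set of ordinals: the unique ordinal `o` such that `A` is the image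
of `Iio o` under a strictly monotone map (with junk value if no such `o` exists). -/
def OT (A : Set Ordinal.{u}) : Ordinal.{u} :=
  sInf {o : Ordinal.{u} | ∃ g : Ordinal.{u} → Ordinal.{u},
    StrictMonoOn g (Set.Iio o) ∧ g '' Set.Iio o = A}

/-- `C` is a club (closed and unbounded) subset of `κ`: all of its members are `< κ`, it is
unbounded in `κ`, and it contains the supremum of each of its nonempty subsets bounded in `κ`. -/
def IsClubIn (C : Set Ordinal) (κ : Ordinal) : Prop :=
  (∀ x ∈ C, x < κ) ∧ (∀ α < κ, ∃ β ∈ C, α < β) ∧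
  (∀ S : Set Ordinal, S ⊆ C → S.Nonempty → sSup S < κ → sSup S ∈ C)

/-- `S` is a stationary subset of `κ`: it meets every club of `κ`. -/
def IsStationaryIn (S : Set Ordinal) (κ : Ordinal) : Prop :=
  (∀ x ∈ S, x < κ) ∧ ∀ C, IsClubIn C κ → (S ∩ C).Nonempty

/-- If `(A_α : α ∈ S)` is a `◇(S)`-sequence on a stationary `S ⊆ {α < ω₂ : cf α = ω₁}`,
then `Unif^c_{S,2}` fails: there is `F : S → 2` such that no `H : ω₂ → 2` uniformizes `F`
modulo clubs. -/
lemma club_inter {C D : Set Ordinal.{u}} {α : Ordinal.{u}} (hcof : ℵ₀ < α.cof)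
    (hC : IsClubIn C α) (hD : IsClubIn D α) : (C ∩ D).Nonempty := by
  classical
  have hα : (0 : Ordinal) < α := by
    rcases (zero_le (a := α)).lt_or_eq with h | h
    · exact h
    · exfalso; rw [← h, Ordinal.cof_zero] at hcof
      exact absurd hcof (by simp)
  set nextC : Ordinal → Ordinal := fun x =>
    if h : x < α then Classical.choose (hC.2.1 x h) else 0 with hnC
  set nextD : Ordinal → Ordinal := fun x =>
    if h : x < α then Classical.choose (hD.2.1 x h) else 0 with hnD
  have hnextC : ∀ x, x < α → nextC x ∈ C ∧ x < nextC x := by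
    intro x h
    have := Classical.choose_spec (hC.2.1 x h)
    simpa [hnC, dif_pos h] using this
  have hnextD : ∀ x, x < α → nextD x ∈ D ∧ x < nextD x := by
    intro x h
    have := Classical.choose_spec (hD.2.1 x h)
    simpa [hnD, dif_pos h] using this
  -- interleaved sequence of pairs
  let q : ℕ → Ordinal × Ordinal := fun n =>
    Nat.rec (nextC 0, nextD (nextC 0))
      (fun _ p => (nextC p.2, nextD (nextC p.2))) n
  have hq0 : q 0 = (nextC 0, nextD (nextC 0)) := rfl
  have hqs : ∀ n, q (n + 1) = (nextC (q n).2, nextD (nextC (q n).2)) := fun n => rfl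
  have inv : ∀ n, (q n).1 ∈ C ∧ (q n).2 ∈ D ∧ (q n).1 < (q n).2 := by
    intro n
    induction n with
    | zero =>
      have h1 := hnextC 0 hα
      have h2 := hnextD _ (hC.1 _ h1.1)
      exact ⟨h1.1, h2.1, h2.2⟩
    | succ n ih =>
      have hd : (q n).2 < α := hD.1 _ ih.2.1
      have h1 := hnextC _ hd
      have h2 := hnextD _ (hC.1 _ h1.1)
      rw [hqs n]
      exact ⟨h1.1, h2.1, h2.2⟩
  have step : ∀ n, (q n).2 < (q (n + 1)).1 := by
    intro n
    have hd : (q n).2 < α := hD.1 _ (inv n).2.1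
    have := (hnextC _ hd).2
    rw [hqs n]
    exact this
  set c : ℕ → Ordinal := fun n => (q n).1 with hc
  set d : ℕ → Ordinal := fun n => (q n).2 with hd
  have hcα : ∀ n, c n < α := fun n => hC.1 _ (inv n).1
  have hdα : ∀ n, d n < α := fun n => hD.1 _ (inv n).2.1
  have hs : (⨆ n, c n) < α := by
    refine Ordinal.iSup_lt_ord_lift ?_ hcα
    simpa using hcof
  have hsd : sSup (Set.range d) = ⨆ n, c n := by
    apply le_antisymm
    · refine csSup_le ⟨d 0, 0, rfl⟩ ?_
      rintro x ⟨n, rfl⟩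
      exact le_trans (step n).le (le_ciSup (Ordinal.bddAbove_range c) (n + 1))
    · refine ciSup_le fun n => ?_
      exact le_trans (inv n).2.2.le (le_csSup (Ordinal.bddAbove_range d) ⟨n, rfl⟩)
  have hsc : sSup (Set.range c) = ⨆ n, c n := rfl
  have hmemC : (⨆ n, c n) ∈ C := by
    have := hC.2.2 (Set.range c) (by rintro x ⟨n, rfl⟩; exact (inv n).1) ⟨c 0, 0, rfl⟩
      (by rw [hsc]; exact hs)
    rwa [hsc] at this
  have hmemD : (⨆ n, c n) ∈ D := by
    have := hD.2.2 (Set.range d) (by rintro x ⟨n, rfl⟩; exact (inv n).2.1) ⟨d 0, 0, rfl⟩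
      (by rw [hsd]; exact hs)
    rwa [hsd] at this
  exact ⟨_, hmemC, hmemD⟩

theorem stmt9 (S : Set Ordinal)
    (hScof : ∀ α ∈ S, α < omega2 ∧ α.cof = aleph 1)
    (hstat : IsStationaryIn S omega2)
    (A : Ordinal → Set Ordinal) (hA : ∀ α ∈ S, A α ⊆ Set.Iio α)
    (hguess : ∀ B ⊆ Set.Iio omega2,
      IsStationaryIn {α | α ∈ S ∧ B ∩ Set.Iio α = A α} omega2) :
    ∃ F : Ordinal → Fin 2,
      ¬ ∃ H : Ordinal → Fin 2, ∀ α ∈ S, ∃ C, IsClubIn C α ∧ ∀ ξ ∈ C, H ξ = F α := by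
  classical
  refine ⟨fun α => if ∃ C, IsClubIn C α ∧ ∀ ξ ∈ C, ξ ∉ A α then 1 else 0, ?_⟩
  rintro ⟨H, hH⟩
  set B : Set Ordinal := {ξ | ξ < omega2 ∧ H ξ = 1} with hBdef
  have hBsub : B ⊆ Set.Iio omega2 := fun ξ h => h.1
  have hT := hguess B hBsub
  have hlim : Order.IsSuccLimit omega2 := by
    unfold omega2; exact Cardinal.isSuccLimit_ord (Cardinal.aleph0_le_aleph 2)
  have hclub : IsClubIn (Set.Iio omega2) omega2 :=
    ⟨fun x hx => hx, fun a ha => ⟨Order.succ a, hlim.succ_lt ha, Order.lt_succ a⟩,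
      fun _ _ _ h => h⟩
  obtain ⟨α, ⟨hαS, hAB⟩, hαlt⟩ := hT.2 _ hclub
  have hcof : ℵ₀ < α.cof := by
    rw [(hScof α hαS).2]
    exact Cardinal.aleph0_lt_aleph_one
  have key : ∀ ξ < α, (ξ ∈ A α ↔ H ξ = 1) := by
    intro ξ hξ
    constructor
    · intro h; rw [← hAB] at h; exact h.1.2
    · intro h; rw [← hAB]; exact ⟨⟨hξ.trans hαlt, h⟩, hξ⟩
  obtain ⟨C, hC, hHC⟩ := hH α hαS
  by_cases hP : ∃ C', IsClubIn C' α ∧ ∀ ξ ∈ C', ξ ∉ A α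
  · obtain ⟨C', hC', hC'A⟩ := hP
    obtain ⟨ξ, hξC, hξC'⟩ := club_inter hcof hC hC'
    have h1 : H ξ = 1 := by
      rw [hHC ξ hξC]; exact if_pos ⟨C', hC', hC'A⟩
    exact hC'A ξ hξC' ((key ξ (hC.1 ξ hξC)).2 h1)
  · apply hP
    refine ⟨C, hC, fun ξ hξ hmem => ?_⟩
    have h1 := (key ξ (hC.1 ξ hξ)).1 hmem
    rw [hHC ξ hξ] at h1
    have h2 : (if ∃ C', IsClubIn C' α ∧ ∀ ξ ∈ C', ξ ∉ A α then (1 : Fin 2) else 0) = 1 := h1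
    rw [if_neg hP] at h2
    exact absurd h2 (by decide)
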